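/- Let I be a left rooted quiver and R_• a family of rings indexed by vertices with flat transition ring homomorphisms R_i → R_j along arrows (each R_j flat as left and right R_i-module). Let M be a representation assigning to each vertex i a left R_i-module M_i and to each arrow a : i → j an R_j-linear map R_j ⊗_{R_i} M_i → M_j. If at every vertex i the canonical map φ_i^M : ⨁_{a ∈ I(•,i)} R_i ⊗_{R_{s(a)}} M_{s(a)} → M_i is a monomorphism with flat cokernel, then the Pontryagin dual representation M^+ (with (M^+)_i = Hom_ℤ(M_i, ℚ/ℤ)) satisfies: at every vertex j the canonical map ψ_j^{M^+} : (M_j)^+ → ∏_{arrows a with source j in I^op} Hom_{R_{t(a)}}(R_j, (M_{t(a)})^+) is an epimorphism with injective kernel. -/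

import Mathlib

namespace Paper

open CategoryTheory TensorProduct MulOpposite

noncomputable def rootFiltration (V : Type) [Quiver V] (χ : Ordinal.{0}) : Set V :=
  Ordinal.limitRecOn χ
    (∅ : Set V)
    (fun _ W => W ∪ { i : V | ∀ ⦃j : V⦄, (j ⟶ i) → j ∈ W })
    (fun χ' _ ih => ⋃ (μ : Ordinal.{0}) (h : μ < χ'), ih μ h)

/-- A quiver is left rooted if the transfinite sequence `V_χ` exhausts all the vertices. -/
def IsLeftRooted (V : Type) [Quiver V] : Prop :=
  ∃ lam : Ordinal.{0}, rootFiltration V lam = Set.univ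

variable (R : Type) [Ring R]

def nctRel (E : Type) [AddCommGroup E] [Module Rᵐᵒᵖ E]
    (F : Type) [AddCommGroup F] [Module R F] : Submodule ℤ (TensorProduct ℤ E F) :=
  Submodule.span ℤ { x | ∃ (e : E) (r : R) (f : F),
    x = (op r • e) ⊗ₜ[ℤ] f - e ⊗ₜ[ℤ] (r • f) }

/-- The tensor product `E ⊗_R F` of a right `R`-module `E` and a left `R`-module `F`. -/
abbrev NCTensor (E : Type) [AddCommGroup E] [Module Rᵐᵒᵖ E]
    (F : Type) [AddCommGroup F] [Module R F] : Type :=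
  TensorProduct ℤ E F ⧸ nctRel R E F

noncomputable def nctMapLeft {F : Type} [AddCommGroup F] [Module R F]
    {E E' : Type} [AddCommGroup E] [Module Rᵐᵒᵖ E] [AddCommGroup E'] [Module Rᵐᵒᵖ E']
    (h : E →ₗ[Rᵐᵒᵖ] E') : NCTensor R E F →ₗ[ℤ] NCTensor R E' F :=
  Submodule.mapQ _ _ (LinearMap.rTensor F h.toAddMonoidHom.toIntLinearMap) (by
    rw [nctRel, Submodule.span_le]
    rintro x ⟨e, r, f, rfl⟩
    refine Submodule.mem_comap.2 ?_
    erw [map_sub, LinearMap.rTensor_tmul, LinearMap.rTensor_tmul]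
    refine Submodule.subset_span ⟨h e, r, f, ?_⟩
    simp [map_smul])

noncomputable def nctMapRight {E : Type} [AddCommGroup E] [Module Rᵐᵒᵖ E]
    {F F' : Type} [AddCommGroup F] [Module R F] [AddCommGroup F'] [Module R F']
    (g : F →ₗ[R] F') : NCTensor R E F →ₗ[ℤ] NCTensor R E F' :=
  Submodule.mapQ _ _ (LinearMap.lTensor E g.toAddMonoidHom.toIntLinearMap) (by
    rw [nctRel, Submodule.span_le]
    rintro x ⟨e, r, f, rfl⟩
    refine Submodule.mem_comap.2 ?_
    erw [map_sub, LinearMap.lTensor_tmul, LinearMap.lTensor_tmul]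
    refine Submodule.subset_span ⟨e, r, g f, ?_⟩
    simp [map_smul])

/-- A left `R`-module `F` is flat if the functor `- ⊗_R F` is exact. -/
def LeftFlat (F : Type) [AddCommGroup F] [Module R F] : Prop :=
  ∀ (E₁ E₂ E₃ : Type) [AddCommGroup E₁] [Module Rᵐᵒᵖ E₁] [AddCommGroup E₂] [Module Rᵐᵒᵖ E₂]
    [AddCommGroup E₃] [Module Rᵐᵒᵖ E₃] (f : E₁ →ₗ[Rᵐᵒᵖ] E₂) (g : E₂ →ₗ[Rᵐᵒᵖ] E₃),
    Function.Injective f → Function.Surjective g → Function.Exact f g →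
    Function.Injective (nctMapLeft R (F := F) f) ∧
      Function.Surjective (nctMapLeft R (F := F) g) ∧
      Function.Exact (nctMapLeft R (F := F) f) (nctMapLeft R (F := F) g)

/-- A right `R`-module `E` is flat if the functor `E ⊗_R -` is exact. -/
def RightFlat (E : Type) [AddCommGroup E] [Module Rᵐᵒᵖ E] : Prop :=
  ∀ (F₁ F₂ F₃ : Type) [AddCommGroup F₁] [Module R F₁] [AddCommGroup F₂] [Module R F₂]
    [AddCommGroup F₃] [Module R F₃] (f : F₁ →ₗ[R] F₂) (g : F₂ →ₗ[R] F₃),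
    Function.Injective f → Function.Surjective g → Function.Exact f g →
    Function.Injective (nctMapRight R (E := E) f) ∧
      Function.Surjective (nctMapRight R (E := E) g) ∧
      Function.Exact (nctMapRight R (E := E) f) (nctMapRight R (E := E) g)

/-- The character module `M⁺ = Hom_ℤ(M, ℚ/ℤ)` of a left `R`-module is a right
`R`-module. -/
noncomputable instance charRightOp (R M : Type) [Ring R] [AddCommGroup M] [Module R M] :
    Module Rᵐᵒᵖ (CharacterModule M) :=
  inferInstanceAs (Module Rᵈᵐᵃ (M →+ AddCircle (1 : ℚ)))

/-- The relations defining the extension of scalars `S ⊗_R G` along `φ : R →+* S`. -/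
def extRel {R S : Type} [Ring R] [Ring S] (φ : R →+* S) (G : Type) [AddCommGroup G]
    [Module R G] : Submodule S (TensorProduct ℤ S G) :=
  Submodule.span S { x | ∃ (s : S) (r : R) (g : G),
    x = (s * φ r) ⊗ₜ[ℤ] g - s ⊗ₜ[ℤ] (r • g) }

/-- The extension of scalars `S ⊗_R G` of a left `R`-module `G` along `φ : R →+* S`. -/
abbrev ExtMod {R S : Type} [Ring R] [Ring S] (φ : R →+* S) (G : Type) [AddCommGroup G]
    [Module R G] : Type :=
  TensorProduct ℤ S G ⧸ extRel φ G

variable {R} {S : Type} [Ring S] (φ : R →+* S)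
  {G : Type} [AddCommGroup G] [Module R G] {N : Type} [AddCommGroup N] [Module S N]

/-- The component of the canonical map `N⁺ → Hom_R(S, G⁺)` dual to a structure map
`σ : S ⊗_R G → N`, an element of the coinduced right `S`-module `Hom_R(S, G⁺)`. -/
noncomputable def coindElt (σ : ExtMod φ G →ₗ[S] N) (χ : CharacterModule N) :
    ((ModuleCat.coextendScalars (RingHom.op φ)).obj
      (ModuleCat.of Rᵐᵒᵖ (CharacterModule G))) where
  toFun x :=
    AddMonoidHom.comp (show N →+ AddCircle (1 : ℚ) from χ)
      (AddMonoidHom.comp σ.toAddMonoidHom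
        (AddMonoidHom.comp ((extRel φ G).mkQ.toAddMonoidHom)
          ((TensorProduct.mk ℤ S G (unop (show Sᵐᵒᵖ from x))).toAddMonoidHom)))
  map_add' x y := by
    refine CharacterModule.ext _ fun m => ?_
    show χ (σ (Submodule.Quotient.mk ((unop (show Sᵐᵒᵖ from x) + unop (show Sᵐᵒᵖ from y)) ⊗ₜ[ℤ] m)))
      = χ (σ (Submodule.Quotient.mk ((unop (show Sᵐᵒᵖ from x)) ⊗ₜ[ℤ] m)))
      + χ (σ (Submodule.Quotient.mk ((unop (show Sᵐᵒᵖ from y)) ⊗ₜ[ℤ] m)))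
    rw [TensorProduct.add_tmul]
    rw [show Submodule.Quotient.mk (((unop (show Sᵐᵒᵖ from x)) ⊗ₜ[ℤ] m) + ((unop (show Sᵐᵒᵖ from y)) ⊗ₜ[ℤ] m))
        = Submodule.Quotient.mk (p := extRel φ G) ((unop (show Sᵐᵒᵖ from x)) ⊗ₜ[ℤ] m)
        + Submodule.Quotient.mk ((unop (show Sᵐᵒᵖ from y)) ⊗ₜ[ℤ] m) from rfl]
    rw [map_add, map_add]
  map_smul' r x := by
    refine CharacterModule.ext _ fun m => ?_
    show χ (σ (Submodule.Quotient.mk ((unop (RingHom.op φ r • (show Sᵐᵒᵖ from x))) ⊗ₜ[ℤ] m)))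
      = χ (σ (Submodule.Quotient.mk ((unop (show Sᵐᵒᵖ from x)) ⊗ₜ[ℤ] (unop r • m))))
    congr 1
    congr 1
    rw [Submodule.Quotient.eq]
    exact Submodule.subset_span ⟨unop (show Sᵐᵒᵖ from x), unop r, m, rfl⟩

end Paper

namespace Paper

open CategoryTheory TensorProduct MulOpposite DirectSum

variable {V : Type} [Quiver.{1} V] (R : V → Type) [∀ i, Ring (R i)]
  (ρ : ∀ ⦃i j : V⦄, (i ⟶ j) → (R i →+* R j))
  (M : ∀ i : V, ModuleCat.{0} (R i))
  (σ : ∀ ⦃i j : V⦄ (a : i ⟶ j), ExtMod (ρ a) (M i) →ₗ[R j] M j)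

/-- The canonical map `φⱼᴹ : ⨁_{a ∈ I(•,j)} R_j ⊗_{R_{s(a)}} M_{s(a)} → M_j`. -/
noncomputable def phiMod (j : V) :
    (⨁ p : Σ i : V, i ⟶ j, ExtMod (ρ p.2) (M p.1)) →ₗ[R j] M j :=
  letI := Classical.decEq (Σ i : V, i ⟶ j)
  DirectSum.toModule (R j) _ _ fun p => σ p.2

/-- The canonical map `ψⱼ : (M_j)⁺ → ∏_{a} Hom_{R_{s(a)}}(R_j, (M_{s(a)})⁺)` of the
Pontryagin dual representation. -/
noncomputable def psiFun (j : V) :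
    CharacterModule (M j) →
      ∀ p : Σ i : V, i ⟶ j,
        ((ModuleCat.coextendScalars (RingHom.op (ρ p.2))).obj
          (ModuleCat.of (R p.1)ᵐᵒᵖ (CharacterModule (M p.1)))) :=
  fun χ p => coindElt (ρ p.2) (σ p.2) χ

end Paper

namespace Paper

open MulOpposite TensorProduct

/-- Lift an additive character through a module quotient. -/
noncomputable def qlift {R T : Type} [Ring R] [AddCommGroup T] [Module R T]
    (p : Submodule R T) (χ : T →+ AddCircle (1 : ℚ)) (h : ∀ x ∈ p, χ x = 0) :
    (T ⧸ p) →+ AddCircle (1 : ℚ) :=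
  QuotientAddGroup.lift p.toAddSubgroup χ h

@[simp] lemma qlift_mk {R T : Type} [Ring R] [AddCommGroup T] [Module R T]
    (p : Submodule R T) (χ : T →+ AddCircle (1 : ℚ)) (h : ∀ x ∈ p, χ x = 0) (x : T) :
    qlift p χ h (Submodule.Quotient.mk x) = χ x := rfl

/-- Characters extend along injective additive maps. -/
lemma charExt {A : Type*} {B : Type} [AddCommGroup A] [AddCommGroup B] (f : A →+ B)
    (hf : Function.Injective f) (χ : A →+ AddCircle (1 : ℚ)) :
    ∃ Ξ : CharacterModule B, ∀ a, Ξ (f a) = χ a := by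
  obtain ⟨Ξ, hΞ⟩ := CharacterModule.dual_surjective_of_injective (R := ℤ)
    f.toIntLinearMap hf (show CharacterModule A from χ)
  exact ⟨Ξ, fun a => DFunLike.congr_fun hΞ a⟩

lemma zcompat {S G : Type} [AddCommGroup S] [AddCommGroup G]
    (b : S →+ G →+ AddCircle (1 : ℚ)) :
    ∀ (z : ℤ) (s : S) (g : G), b (z • s) g = b s (z • g) := fun z s g => by
  rw [map_zsmul, AddMonoidHom.smul_apply, map_zsmul]

lemma vanish_of_smul_closed {S T : Type} [Ring S] [AddCommGroup T] [Module S T]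
    (L : T →+ AddCircle (1 : ℚ)) (s : Set T) (hcl : ∀ a : S, ∀ x ∈ s, L (a • x) = 0) :
    ∀ x ∈ Submodule.span S s, L x = 0 := by
  intro x hx
  have H : ∀ a : S, L (a • x) = 0 := by
    refine Submodule.span_induction (p := fun x _ => ∀ a : S, L (a • x) = 0)
      (fun x hxs a => hcl a x hxs) (fun a => by simp)
      (fun x y _ _ hx hy a => by rw [smul_add, map_add, hx, hy, add_zero])
      (fun c x _ hx a => by rw [smul_smul]; exact hx (a * c)) hx
  simpa using H 1

/-- A character on `ExtMod φ G` from suitable bilinear data. -/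
noncomputable def extChar {R S : Type} [Ring R] [Ring S] (φ : R →+* S) {G : Type}
    [AddCommGroup G] [Module R G] (b : S →+ G →+ AddCircle (1 : ℚ))
    (hb : ∀ (s : S) (r : R) (g : G), b (s * φ r) g = b s (r • g)) :
    CharacterModule (ExtMod φ G) :=
  qlift (extRel φ G) (TensorProduct.liftAddHom b (zcompat b))
    (vanish_of_smul_closed _ _ (by
      rintro a x ⟨s, r, g, rfl⟩
      rw [smul_sub, smul_tmul', smul_tmul', smul_eq_mul, smul_eq_mul, map_sub,
        liftAddHom_tmul, liftAddHom_tmul, ← mul_assoc, hb, sub_self]))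

@[simp] lemma extChar_mk {R S : Type} [Ring R] [Ring S] (φ : R →+* S) {G : Type}
    [AddCommGroup G] [Module R G] (b : S →+ G →+ AddCircle (1 : ℚ))
    (hb : ∀ (s : S) (r : R) (g : G), b (s * φ r) g = b s (r • g)) (s : S) (g : G) :
    extChar φ b hb (Submodule.Quotient.mk (s ⊗ₜ[ℤ] g)) = b s g :=
  TensorProduct.liftAddHom_tmul b (zcompat b) s g

/-- A character on `NCTensor R E F` from suitable bilinear data. -/
noncomputable def nctChar (R : Type) [Ring R] {E F : Type} [AddCommGroup E]
    [Module Rᵐᵒᵖ E] [AddCommGroup F] [Module R F] (b : E →+ F →+ AddCircle (1 : ℚ))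
    (hb : ∀ (e : E) (r : R) (f : F), b (op r • e) f = b e (r • f)) :
    CharacterModule (NCTensor R E F) :=
  qlift (nctRel R E F) (TensorProduct.liftAddHom b (zcompat b))
    (vanish_of_smul_closed _ _ (by
      rintro a x ⟨e, r, f, rfl⟩
      rw [map_zsmul, map_sub, liftAddHom_tmul, liftAddHom_tmul, hb, sub_self, smul_zero]))

@[simp] lemma nctChar_mk (R : Type) [Ring R] {E F : Type} [AddCommGroup E]
    [Module Rᵐᵒᵖ E] [AddCommGroup F] [Module R F] (b : E →+ F →+ AddCircle (1 : ℚ))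
    (hb : ∀ (e : E) (r : R) (f : F), b (op r • e) f = b e (r • f)) (e : E) (f : F) :
    nctChar R b hb (Submodule.Quotient.mk (e ⊗ₜ[ℤ] f)) = b e f :=
  TensorProduct.liftAddHom_tmul b (zcompat b) e f

end Paper

set_option maxHeartbeats 2000000 in
open Paper CategoryTheory MulOpposite in
/-- If all the canonical maps `φᵢᴹ` of a representation `M` over a flat representation of
rings on a left rooted quiver are monomorphisms with flat cokernels, then all the
canonical maps `ψⱼ` of the Pontryagin dual representation `M⁺` are epimorphisms with
injective kernels. -/
theorem stmt15 {V : Type} [Quiver.{1} V] (hV : IsLeftRooted V)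
    (R : V → Type) [∀ i, Ring (R i)] (ρ : ∀ ⦃i j : V⦄, (i ⟶ j) → (R i →+* R j))
    (hflat : ∀ ⦃i j : V⦄ (a : i ⟶ j),
      (@LeftFlat (R i) _ (R j) _ (Module.compHom (R j) (ρ a))) ∧
      (@RightFlat (R i) _ (R j) _ (Module.compHom (R j) (RingHom.op (ρ a)))))
    (M : ∀ i : V, ModuleCat.{0} (R i))
    (σ : ∀ ⦃i j : V⦄ (a : i ⟶ j), ExtMod (ρ a) (M i) →ₗ[R j] M j)
    (hphi : ∀ i : V, Function.Injective (phiMod R ρ M σ i) ∧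
      LeftFlat (R i) ((M i) ⧸ LinearMap.range (phiMod R ρ M σ i))) :
    ∀ j : V, Function.Surjective (psiFun R ρ M σ j) ∧
      ∃ K : Submodule (R j)ᵐᵒᵖ (CharacterModule (M j)),
        (∀ χ : CharacterModule (M j), χ ∈ K ↔ psiFun R ρ M σ j χ = 0) ∧
        Module.Injective (R j)ᵐᵒᵖ K := by
  intro j
  letI := Classical.decEq (Σ i : V, i ⟶ j)
  set N : (Σ i : V, i ⟶ j) → Type := fun p => ExtMod (ρ p.2) (M p.1) with hN
  have key : ∀ (p : Σ i : V, i ⟶ j) (y : ExtMod (ρ p.2) (M p.1)),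
      phiMod R ρ M σ j (DirectSum.lof (R j) _ N p y) = σ p.2 y := by
    intro p y
    rw [phiMod]
    exact DirectSum.toModule_lof (R := R j) (M := N) (φ := fun p => σ p.2) p y
  have hinj := (hphi j).1
  constructor
  · -- surjectivity of ψ
    intro f
    -- the bilinear data attached to each component of `f`
    have bP : ∀ p : (Σ i : V, i ⟶ j),
        { b : (R j) →+ ((M p.1 : Type) →+ AddCircle (1 : ℚ)) //
          (∀ (s : R j) (r : R p.1) (g : M p.1), b (s * ρ p.2 r) g = b s (r • g)) ∧
          ∀ (s : R j) (g : M p.1),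
            b s g = (show CharacterModule (M p.1 : Type) from f p (op s)) g } := by
      intro p
      refine ⟨AddMonoidHom.mk'
        (fun s => ((show CharacterModule (M p.1 : Type) from f p (op s)) :
          (M p.1 : Type) →+ AddCircle (1 : ℚ)))
        (fun s t => ?_), fun s r g => ?_, fun s g => rfl⟩
      · exact (f p).map_add (op s) (op t)
      · have h1 : (show CharacterModule (M p.1 : Type) from f p (op (s * ρ p.2 r)))
            = op r • (show CharacterModule (M p.1 : Type) from f p (op s)) :=
          (f p).map_smul (op r) (op s)
        exact DFunLike.congr_fun h1 g
    set χp : ∀ p : (Σ i : V, i ⟶ j), CharacterModule (ExtMod (ρ p.2) (M p.1)) :=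
      fun p => extChar (ρ p.2) (bP p).1 (bP p).2.1 with hχp
    set χbar : DirectSum (Σ i : V, i ⟶ j) N →+ AddCircle (1 : ℚ) :=
      DirectSum.toAddMonoid (fun p => (χp p : N p →+ AddCircle (1 : ℚ))) with hχbar
    letI : ∀ p, AddCommGroup (N p) := fun p => (inferInstance : AddCommGroup (ExtMod (ρ p.2) (M p.1)))
    obtain ⟨χ, hχ⟩ := charExt (phiMod R ρ M σ j).toAddMonoidHom hinj χbar
    have hχ' : ∀ a, χ (phiMod R ρ M σ j a) = χbar a := fun a => hχ a
    refine ⟨χ, funext fun p => ?_⟩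
    refine LinearMap.ext fun x => ?_
    show (show CharacterModule (M p.1 : Type) from psiFun R ρ M σ j χ p x)
      = (show CharacterModule (M p.1 : Type) from f p x)
    refine CharacterModule.ext _ fun g => ?_
    show χ (σ p.2 (Submodule.Quotient.mk ((unop x) ⊗ₜ[ℤ] g)))
      = (show CharacterModule (M p.1 : Type) from f p x) g
    calc χ (σ p.2 (Submodule.Quotient.mk ((unop x) ⊗ₜ[ℤ] g)))
        = χ (phiMod R ρ M σ j
            (DirectSum.lof (R j) _ N p (Submodule.Quotient.mk ((unop x) ⊗ₜ[ℤ] g)))) := by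
          rw [key]
      _ = χbar (DirectSum.lof (R j) _ N p (Submodule.Quotient.mk ((unop x) ⊗ₜ[ℤ] g))) :=
          hχ' _
      _ = χp p (Submodule.Quotient.mk ((unop x) ⊗ₜ[ℤ] g)) := by
          rw [hχbar, DirectSum.lof_eq_of]
          exact DirectSum.toAddMonoid_of _ _ _
      _ = (bP p).1 (unop x) g := by rw [hχp, extChar_mk]
      _ = (show CharacterModule (M p.1 : Type) from f p (op (unop x))) g := (bP p).2.2 _ _
      _ = (show CharacterModule (M p.1 : Type) from f p x) g := by rfl
  · -- the kernel is injective
    set p : Submodule (R j) (M j) := LinearMap.range (phiMod R ρ M σ j) with hp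
    refine ⟨{ carrier := { χ : CharacterModule (M j) | ∀ m ∈ p, χ m = 0 }
              add_mem' := fun {χ χ'} h1 h2 m hm => by
                show χ m + χ' m = 0
                rw [h1 m hm, h2 m hm, add_zero]
              zero_mem' := fun m _ => rfl
              smul_mem' := fun c {χ} hχ m hm => by
                show χ (unop c • m) = 0
                exact hχ _ (p.smul_mem _ hm) }, fun χ => ?_, ?_⟩
    · constructor
      · -- χ kills range φ → ψ χ = 0
        intro hχ
        funext q
        refine LinearMap.ext fun x => ?_
        show (show CharacterModule (M q.1 : Type) from psiFun R ρ M σ j χ q x)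
          = (show CharacterModule (M q.1 : Type) from 0)
        refine CharacterModule.ext _ fun g => ?_
        show χ (σ q.2 (Submodule.Quotient.mk ((unop x) ⊗ₜ[ℤ] g))) = 0
        rw [← key]
        exact hχ _ ⟨_, rfl⟩
      · -- ψ χ = 0 → χ kills range φ
        intro hψ m hm
        obtain ⟨x, rfl⟩ := hm
        have hz : AddMonoidHom.comp (show (M j : Type) →+ AddCircle (1 : ℚ) from χ)
            (phiMod R ρ M σ j).toAddMonoidHom = 0 := by
          refine DirectSum.addHom_ext fun q y => ?_
          obtain ⟨t, rfl⟩ := Submodule.Quotient.mk_surjective _ y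
          show χ (phiMod R ρ M σ j (DirectSum.of N q (Submodule.Quotient.mk t))) = 0
          rw [← DirectSum.lof_eq_of (R j), key]
          induction t using TensorProduct.induction_on with
          | zero =>
            rw [show (Submodule.Quotient.mk (0 : TensorProduct ℤ (R j) (M q.1)) :
              ExtMod (ρ q.2) (M q.1)) = 0 from rfl, map_zero, map_zero]
          | tmul s g =>
            calc χ (σ q.2 (Submodule.Quotient.mk (s ⊗ₜ[ℤ] g)))
                = (show CharacterModule (M q.1 : Type) from psiFun R ρ M σ j χ q (op s)) g := rfl
              _ = 0 := by rw [hψ]; rfl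
          | add t t' ht ht' =>
            rw [show (Submodule.Quotient.mk (t + t') : ExtMod (ρ q.2) (M q.1))
                = Submodule.Quotient.mk t + Submodule.Quotient.mk t' from rfl,
              map_add, map_add, ht, ht', add_zero]
        exact DFunLike.congr_fun hz x
    · -- injectivity of the kernel, via Baer's criterion
      refine Module.Baer.injective ?_
      intro I g
      have hflatC : LeftFlat (R j) ((M j : Type) ⧸ p) := (hphi j).2
      have h1 := hflatC (↥I) ((R j)ᵐᵒᵖ) (((R j)ᵐᵒᵖ) ⧸ I) I.subtype I.mkQ
      have h2 := h1 Subtype.val_injective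
      have h3 := h2 (fun c => Quotient.inductionOn' c fun m => ⟨m, rfl⟩)
      obtain ⟨hι, -, -⟩ := h3 (by
        intro y
        constructor
        · intro hy
          have hmem : y ∈ I := (Submodule.Quotient.mk_eq_zero I).1 hy
          exact ⟨⟨y, hmem⟩, rfl⟩
        · rintro ⟨x, rfl⟩
          exact (Submodule.Quotient.mk_eq_zero I).2 x.2)
      have bdef : ∀ y : ↥I, { c : ((M j : Type) ⧸ p) →+ AddCircle (1 : ℚ) //
          ∀ m : M j, c (Submodule.Quotient.mk m) = (g y : CharacterModule (M j)) m } :=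
        fun y => ⟨qlift p ((g y : CharacterModule (M j)) : (M j : Type) →+ AddCircle (1 : ℚ))
          (g y).2, fun m => rfl⟩
      set b : ↥I →+ (((M j : Type) ⧸ p) →+ AddCircle (1 : ℚ)) :=
        AddMonoidHom.mk' (fun y => (bdef y).1) (fun y y' => by
          refine AddMonoidHom.ext fun c => ?_
          obtain ⟨m, rfl⟩ := Submodule.Quotient.mk_surjective _ c
          rw [AddMonoidHom.add_apply, (bdef _).2, (bdef _).2, (bdef _).2, map_add g]
          rfl) with hbdef
      have hb : ∀ (e : ↥I) (r : R j) (c : ((M j : Type) ⧸ p)), b (op r • e) c = b e (r • c) := by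
        intro e r c
        obtain ⟨m, rfl⟩ := Submodule.Quotient.mk_surjective _ c
        rw [show ((r : R j) • (Submodule.Quotient.mk m : ((M j : Type) ⧸ p))) =
          Submodule.Quotient.mk (r • m) from rfl]
        show (bdef _).1 _ = (bdef _).1 _
        rw [(bdef _).2, (bdef _).2, map_smul g]
        rfl
      set ξ : CharacterModule (NCTensor (R j) (↥I) ((M j : Type) ⧸ p)) := nctChar (R j) b hb with hξdef
      obtain ⟨Ξ, hΞ⟩ := charExt (nctMapLeft (R j) (F := ((M j : Type) ⧸ p)) I.subtype).toAddMonoidHom hι ξ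
      have hΞ' : ∀ a, Ξ (nctMapLeft (R j) (F := ((M j : Type) ⧸ p)) I.subtype a) = ξ a :=
        fun a => hΞ a
      set κ0 : CharacterModule (M j) :=
        AddMonoidHom.comp (show (NCTensor (R j) ((R j)ᵐᵒᵖ) ((M j : Type) ⧸ p)) →+ AddCircle (1 : ℚ) from Ξ)
          (AddMonoidHom.comp ((nctRel (R j) ((R j)ᵐᵒᵖ) ((M j : Type) ⧸ p)).mkQ.toAddMonoidHom)
            (AddMonoidHom.comp ((TensorProduct.mk ℤ ((R j)ᵐᵒᵖ) ((M j : Type) ⧸ p) 1).toAddMonoidHom)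
              (p.mkQ.toAddMonoidHom))) with hκ0
      have hκmem : ∀ m ∈ p, κ0 m = 0 := by
        intro m hm
        show Ξ (Submodule.Quotient.mk ((1 : (R j)ᵐᵒᵖ) ⊗ₜ[ℤ] (Submodule.Quotient.mk m : ((M j : Type) ⧸ p)))) = 0
        rw [(Submodule.Quotient.mk_eq_zero p).2 hm, TensorProduct.tmul_zero]
        rw [show (Submodule.Quotient.mk (0 : TensorProduct ℤ ((R j)ᵐᵒᵖ) ((M j : Type) ⧸ p)) :
          NCTensor (R j) ((R j)ᵐᵒᵖ) ((M j : Type) ⧸ p)) = 0 from rfl, map_zero]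
      refine ⟨LinearMap.toSpanSingleton _ _ ⟨κ0, hκmem⟩, fun x hx => ?_⟩
      rw [LinearMap.toSpanSingleton_apply]
      refine Subtype.ext (CharacterModule.ext _ fun m => ?_)
      show κ0 (unop x • m) = (g ⟨x, hx⟩ : CharacterModule (M j)) m
      show Ξ (Submodule.Quotient.mk ((1 : (R j)ᵐᵒᵖ) ⊗ₜ[ℤ]
        (Submodule.Quotient.mk (unop x • m) : ((M j : Type) ⧸ p)))) = _
      have e1 : (Submodule.Quotient.mk ((1 : (R j)ᵐᵒᵖ) ⊗ₜ[ℤ]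
            (Submodule.Quotient.mk (unop x • m) : ((M j : Type) ⧸ p))) : NCTensor (R j) ((R j)ᵐᵒᵖ) ((M j : Type) ⧸ p)) =
          Submodule.Quotient.mk (x ⊗ₜ[ℤ] (Submodule.Quotient.mk m : ((M j : Type) ⧸ p))) := by
        rw [show (Submodule.Quotient.mk (unop x • m) : ((M j : Type) ⧸ p))
            = unop x • (Submodule.Quotient.mk m : ((M j : Type) ⧸ p)) from rfl]
        rw [eq_comm, Submodule.Quotient.eq]
        refine Submodule.subset_span ⟨1, unop x, (Submodule.Quotient.mk m : ((M j : Type) ⧸ p)), ?_⟩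
        rw [smul_eq_mul, mul_one, op_unop]
      rw [e1]
      have e2 : (Submodule.Quotient.mk (x ⊗ₜ[ℤ] (Submodule.Quotient.mk m : ((M j : Type) ⧸ p))) :
          NCTensor (R j) ((R j)ᵐᵒᵖ) ((M j : Type) ⧸ p)) =
          nctMapLeft (R j) (F := ((M j : Type) ⧸ p)) I.subtype
            (Submodule.Quotient.mk ((⟨x, hx⟩ : ↥I) ⊗ₜ[ℤ] (Submodule.Quotient.mk m : ((M j : Type) ⧸ p)))) := by
        erw [nctMapLeft, Submodule.mapQ_apply, LinearMap.rTensor_tmul]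
        rfl
      rw [e2]
      calc Ξ (nctMapLeft (R j) (F := ((M j : Type) ⧸ p)) I.subtype
            (Submodule.Quotient.mk ((⟨x, hx⟩ : ↥I) ⊗ₜ[ℤ] (Submodule.Quotient.mk m : ((M j : Type) ⧸ p)))))
          = ξ (Submodule.Quotient.mk ((⟨x, hx⟩ : ↥I) ⊗ₜ[ℤ] (Submodule.Quotient.mk m : ((M j : Type) ⧸ p)))) :=
            hΞ' _
        _ = b ⟨x, hx⟩ (Submodule.Quotient.mk m : ((M j : Type) ⧸ p)) := by rw [hξdef, nctChar_mk]
        _ = (g ⟨x, hx⟩ : CharacterModule (M j)) m := (bdef _).2 m
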